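/- Let a < T be real numbers, let f : ℝ × ℝ × ℝ × ℝ → ℝ, (t, y, v, z) ↦ f(t, y, v, z), be continuously differentiable, and let ỹ ∈ C¹([a,T], ℝ) be such that the map t ↦ f_v(t, ỹ(t), ỹ'(t), ỹ(T)) is continuously differentiable on [a,T] and the Euler–Lagrange equation d/dt f_v(t, ỹ(t), ỹ'(t), ỹ(T)) = f_y(t, ỹ(t), ỹ'(t), ỹ(T)) holds on [a,T]. If moreover ∫_a^T [ f_y(t, ỹ(t), ỹ'(t), ỹ(T)) h(t) + f_v(t, ỹ(t), ỹ'(t), ỹ(T)) h'(t) + f_z(t, ỹ(t), ỹ'(t), ỹ(T)) h(T) ] dt = 0 for every h ∈ C¹([a,T], ℝ) with h(a) = 0, then f_v(T, ỹ(T), ỹ'(T), ỹ(T)) + ∫_a^T f_z(t, ỹ(t), ỹ'(t), ỹ(T)) dt = 0. -/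

import Mathlib

open Set intervalIntegral

/-- Partial derivative of `f (t, y, v, z)` with respect to the second argument `y`. -/
noncomputable def fy (f : ℝ → ℝ → ℝ → ℝ → ℝ) (t y v z : ℝ) : ℝ :=
  deriv (fun s => f t s v z) y

/-- Partial derivative of `f (t, y, v, z)` with respect to the third argument `v`. -/
noncomputable def fv (f : ℝ → ℝ → ℝ → ℝ → ℝ) (t y v z : ℝ) : ℝ :=
  deriv (fun s => f t y s z) v

/-- Partial derivative of `f (t, y, v, z)` with respect to the fourth argument `z`. -/
noncomputable def fz (f : ℝ → ℝ → ℝ → ℝ → ℝ) (t y v z : ℝ) : ℝ :=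
  deriv (fun s => f t y v s) z

lemma fz_eq_fderiv (f : ℝ → ℝ → ℝ → ℝ → ℝ)
    (hf : ContDiff ℝ 1 (fun p : ℝ × ℝ × ℝ × ℝ => f p.1 p.2.1 p.2.2.1 p.2.2.2))
    (t y v z : ℝ) :
    fz f t y v z
      = fderiv ℝ (fun p : ℝ × ℝ × ℝ × ℝ => f p.1 p.2.1 p.2.2.1 p.2.2.2)
          (t, y, v, z) (0, 0, 0, 1) := by
  have hF := (hf.differentiable one_ne_zero (t, y, v, z)).hasFDerivAt
  have hline : HasDerivAt (fun s : ℝ => ((t, y, v, s) : ℝ × ℝ × ℝ × ℝ))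
      ((0 : ℝ), (0 : ℝ), (0 : ℝ), (1 : ℝ)) z := by
    have : HasDerivAt (fun s : ℝ => s) 1 z := hasDerivAt_id z
    exact (hasDerivAt_const z t).prodMk ((hasDerivAt_const z y).prodMk
      ((hasDerivAt_const z v).prodMk this))
  have := hF.comp_hasDerivAt z hline
  exact this.deriv

/-- New natural boundary (transversality) condition: if the Euler–Lagrange equation holds
on `[a, T]` and the first variation vanishes for all `C¹` variations `h` with `h a = 0`,
then `f_v(T, ỹ T, ỹ' T, ỹ T) + ∫_a^T f_z(t, ỹ t, ỹ' t, ỹ T) dt = 0`. -/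
theorem new_transversality_condition
    (a T : ℝ) (haT : a < T)
    (f : ℝ → ℝ → ℝ → ℝ → ℝ)
    (hf : ContDiff ℝ 1 (fun p : ℝ × ℝ × ℝ × ℝ => f p.1 p.2.1 p.2.2.1 p.2.2.2))
    (ytil : ℝ → ℝ) (hy : ContDiff ℝ 1 ytil)
    (hFdiff : ∀ t ∈ Icc a T,
      DifferentiableAt ℝ (fun s => fv f s (ytil s) (deriv ytil s) (ytil T)) t)
    (hFcont : ContinuousOn
      (deriv (fun s => fv f s (ytil s) (deriv ytil s) (ytil T))) (Icc a T))
    (hEL : ∀ t ∈ Icc a T,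
      deriv (fun s => fv f s (ytil s) (deriv ytil s) (ytil T)) t
        = fy f t (ytil t) (deriv ytil t) (ytil T))
    (hvar : ∀ h : ℝ → ℝ, ContDiff ℝ 1 h → h a = 0 →
      (∫ t in a..T,
        fy f t (ytil t) (deriv ytil t) (ytil T) * h t
          + fv f t (ytil t) (deriv ytil t) (ytil T) * deriv h t
          + fz f t (ytil t) (deriv ytil t) (ytil T) * h T) = 0) :
    fv f T (ytil T) (deriv ytil T) (ytil T)
      + (∫ t in a..T, fz f t (ytil t) (deriv ytil t) (ytil T)) = 0 := by
  set F : ℝ → ℝ := fun s => fv f s (ytil s) (deriv ytil s) (ytil T) with hFdef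
  set Z : ℝ → ℝ := fun t => fz f t (ytil t) (deriv ytil t) (ytil T) with hZdef
  have haT' : a ≤ T := haT.le
  have huIcc : uIcc a T = Icc a T := uIcc_of_le haT'
  -- continuity of Z
  have hZcont : Continuous Z := by
    have hd : Continuous (fderiv ℝ (fun p : ℝ × ℝ × ℝ × ℝ => f p.1 p.2.1 p.2.2.1 p.2.2.2)) :=
      (contDiff_one_iff_fderiv.mp hf).2
    have hcurve : Continuous (fun t : ℝ => ((t, ytil t, deriv ytil t, ytil T) : ℝ × ℝ × ℝ × ℝ)) :=
      continuous_id.prodMk ((hy.continuous).prodMk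
        ((hy.continuous_deriv le_rfl).prodMk continuous_const))
    have : Continuous (fun t : ℝ =>
        fderiv ℝ (fun p : ℝ × ℝ × ℝ × ℝ => f p.1 p.2.1 p.2.2.1 p.2.2.2)
          (t, ytil t, deriv ytil t, ytil T) (0, 0, 0, 1)) := by
      exact (ContinuousLinearMap.apply ℝ ℝ (0,0,0,1)).continuous.comp (hd.comp hcurve)
    convert this using 1
    funext t
    exact fz_eq_fderiv f hf t (ytil t) (deriv ytil t) (ytil T)
  -- continuity of F on Icc
  have hFcontOn : ContinuousOn F (Icc a T) := fun t ht =>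
    (hFdiff t ht).continuousAt.continuousWithinAt
  -- the test variation h(t) = t - a
  have hC1 : ContDiff ℝ 1 (fun t : ℝ => t - a) := contDiff_id.sub contDiff_const
  have key := hvar (fun t => t - a) hC1 (by simp)
  have hderivh : ∀ t : ℝ, deriv (fun t : ℝ => t - a) t = 1 := by
    intro t; simp [deriv_sub_const]
  -- g and its derivative
  set g : ℝ → ℝ := fun t => F t * (t - a) with hgdef
  have hg : ∀ t ∈ uIcc a T, HasDerivAt g (deriv F t * (t - a) + F t) t := by
    intro t ht
    rw [huIcc] at ht
    have h1 : HasDerivAt F (deriv F t) t := (hFdiff t ht).hasDerivAt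
    have h2 : HasDerivAt (fun s : ℝ => s - a) 1 t := (hasDerivAt_id t).sub_const a
    have := h1.mul h2
    rw [mul_one] at this
    exact this
  have hgi : IntervalIntegrable (fun t => deriv F t * (t - a) + F t) MeasureTheory.volume a T := by
    apply ContinuousOn.intervalIntegrable
    rw [huIcc]
    exact (hFcont.mul (continuousOn_id.sub continuousOn_const)).add hFcontOn
  have hFTC : (∫ t in a..T, (deriv F t * (t - a) + F t)) = F T * (T - a) := by
    have := integral_eq_sub_of_hasDerivAt hg hgi
    simpa [hgdef] using this
  have hZi : IntervalIntegrable (fun t => Z t * (T - a)) MeasureTheory.volume a T :=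
    (hZcont.mul continuous_const).intervalIntegrable a T
  -- rewrite the variational identity
  have key2 : (∫ t in a..T, (deriv F t * (t - a) + F t + Z t * (T - a))) = 0 := by
    rw [← key]
    apply intervalIntegral.integral_congr
    intro t ht
    rw [huIcc] at ht
    have := hEL t ht
    simp only [hderivh]
    rw [← this]
    ring
  have hsplit : (∫ t in a..T, (deriv F t * (t - a) + F t + Z t * (T - a)))
      = (∫ t in a..T, (deriv F t * (t - a) + F t)) + (∫ t in a..T, Z t * (T - a)) :=
    intervalIntegral.integral_add hgi hZi
  have hZmul : (∫ t in a..T, Z t * (T - a)) = (∫ t in a..T, Z t) * (T - a) := by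
    rw [← intervalIntegral.integral_mul_const]
  have hfinal : F T * (T - a) + (∫ t in a..T, Z t) * (T - a) = 0 := by
    rw [← hFTC, ← hZmul, ← hsplit]; exact key2
  have hne : (T - a) ≠ 0 := sub_ne_zero.mpr (ne_of_gt haT)
  have : (F T + (∫ t in a..T, Z t)) * (T - a) = 0 := by linarith [hfinal]
  have := mul_eq_zero.mp this
  rcases this with h | h
  · exact h
  · exact absurd h hne
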